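/- For every positive integer t there exist constants α, β, γ > 0 such that the following holds: for all positive integers s and n ≥ 2, if G is a quasi-comparability graph of complexity t on n vertices that contains no clique of size s, then the chromatic number of G satisfies χ(G) ≤ α·s^β·(log n)^γ. -/

import Mathlib

open Finset

/-- The coordinate-wise strict partial order on `ℝ^t`. -/
def PrecLT {t : ℕ} (x y : Fin t → ℝ) : Prop := ∀ i, x i < y i

/-- `G` is (isomorphic to) a quasi-comparability graph of complexity `t`: the vertices can be
identified with pairs `(x,y) ∈ ℝ^t × ℝ^t`, and `(x,y)`, `(x',y')` are adjacent iff
`x ≺ y'` or `x' ≺ y`. -/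
def IsQuasiComp {V : Type} (G : SimpleGraph V) (t : ℕ) : Prop :=
  ∃ v : V → (Fin t → ℝ) × (Fin t → ℝ), Function.Injective v ∧
    ∀ x y : V, x ≠ y →
      (G.Adj x y ↔ PrecLT (v x).1 (v y).2 ∨ PrecLT (v y).1 (v x).2)


/-- halves determine: if `a/2^(l+1) = p`, `b/2^(l+1) = p`, `a/2^l ≠ b/2^l`, `a < b`,
then `a/2^l = 2p` and `b/2^l = 2p+1`. -/
lemma halves (a b l p : ℕ) (ha : a / 2^(l+1) = p) (hb : b / 2^(l+1) = p)
    (hmin : a / 2^l ≠ b / 2^l) (hab : a < b) :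
    a / 2^l = 2*p ∧ b / 2^l = 2*p + 1 := by
  have e : ∀ c : ℕ, c / 2^(l+1) = (c / 2^l) / 2 := fun c => by
    rw [Nat.div_div_eq_div_mul, pow_succ]
  rw [e] at ha hb
  have h1 : a / 2^l ≤ b / 2^l := Nat.div_le_div_right hab.le
  omega

lemma key_fwd (a b a' b' l p : ℕ)
    (ha : a / 2^(l+1) = p) (hb : b / 2^(l+1) = p)
    (hmin : a / 2^l ≠ b / 2^l) (hab : a < b)
    (ha' : a' / 2^(l+1) = p) (hb' : b' / 2^(l+1) = p)
    (hmin' : a' / 2^l ≠ b' / 2^l) (hab' : a' < b') : a < b' := by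
  obtain ⟨h1, h2⟩ := halves a b l p ha hb hmin hab
  obtain ⟨h3, h4⟩ := halves a' b' l p ha' hb' hmin' hab'
  have hlt : a < (2*p+1) * 2^l := by
    rw [← Nat.div_lt_iff_lt_mul (pow_pos (by norm_num : (0:ℕ) < 2) l)]
    omega
  have hge : (2*p+1) * 2^l ≤ b' := by
    calc (2*p+1) * 2^l = (b' / 2^l) * 2^l := by rw [h4]
    _ ≤ b' := Nat.div_mul_le_self _ _
  omega

lemma key_bwd (a b a' b' l p : ℕ)
    (ha : a / 2^l = p) (hb : b / 2^l = p) (ha' : a' / 2^l = p) (hb' : b' / 2^l = p)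
    (hba : b ≤ a) (hba' : b' ≤ a')
    (hmin : ∀ j < l, a / 2^j ≠ b / 2^j) (hmin' : ∀ j < l, a' / 2^j ≠ b' / 2^j) :
    ¬ a < b' := by
  rcases Nat.eq_zero_or_pos l with rfl | hl
  · simp only [pow_zero, Nat.div_one] at ha hb ha' hb'; omega
  · obtain ⟨l', rfl⟩ : ∃ l', l = l' + 1 := ⟨l - 1, by omega⟩
    have hne : a ≠ b := by
      have := hmin 0 (by omega); simpa using this
    have hne' : a' ≠ b' := by
      have := hmin' 0 (by omega); simpa using this
    obtain ⟨h1, h2⟩ := halves b a l' p hb ha (fun h => hmin l' (by omega) h.symm) (by omega)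
    obtain ⟨h3, h4⟩ := halves b' a' l' p hb' ha' (fun h => hmin' l' (by omega) h.symm) (by omega)
    -- b'/2^l' = 2p, a/2^l' = 2p+1 : b' < (2p+1)*2^l' ≤ a
    have hlt : b' < (2*p+1) * 2^l' := by
      rw [← Nat.div_lt_iff_lt_mul (pow_pos (by norm_num : (0:ℕ) < 2) l')]
      omega
    have hge : (2*p+1) * 2^l' ≤ a := by
      calc (2*p+1) * 2^l' = (a / 2^l') * 2^l' := by rw [h2]
      _ ≤ a := Nat.div_mul_le_self _ _
    omega

lemma key_cross_le (a b l p q : ℕ) (ha : a / 2^l = p) (hb : b / 2^l = q)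
    (h : a ≤ b) : p ≤ q := by
  subst ha hb; exact Nat.div_le_div_right h

lemma key_cross_lt (a b l p q : ℕ) (ha : a / 2^l = p) (hb : b / 2^l = q)
    (h : p < q) : a < b := by
  by_contra hc
  exact absurd (key_cross_le b a l q p hb ha (by omega)) (by omega)
lemma cliqueFree_of_map {A V : Type} (G : SimpleGraph V) (H : SimpleGraph A) (f : A → V)
    (hinj : Function.Injective f) (hhom : ∀ a b, H.Adj a b → G.Adj (f a) (f b)) {s : ℕ}
    (hG : G.CliqueFree s) : H.CliqueFree s := by
  intro tt htt
  apply hG (tt.map ⟨f, hinj⟩)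
  constructor
  · intro z hz z' hz' hne
    simp only [Finset.coe_map, Set.mem_image, Finset.mem_coe] at hz hz'
    obtain ⟨a, ha, rfl⟩ := hz
    obtain ⟨a', ha', rfl⟩ := hz'
    exact hhom _ _ (htt.1 ha ha' (fun h => hne (congrArg f h)))
  · rw [Finset.card_map]; exact htt.2

lemma base_colorable : ∀ (s : ℕ) (V : Type) [Fintype V] (G : SimpleGraph V) (R : V → V → Prop),
    Transitive R → Irreflexive R →
    (∀ u v, G.Adj u v → R u v ∨ R v u) →
    (∀ u v, u ≠ v → R u v → G.Adj u v) →
    G.CliqueFree (s+1) → G.Colorable s := by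
  intro s
  induction s with
  | zero =>
    intro V _ G R _ _ _ _ hfree
    have hemp : IsEmpty V := by
      by_contra h
      rw [not_isEmpty_iff] at h
      obtain ⟨v⟩ := h
      exact hfree {v} ⟨by simp, by simp⟩
    exact ⟨SimpleGraph.Coloring.mk (fun v => (hemp.elim v : Fin 0)) (fun {u v} h => (hemp.elim u : False).elim)⟩
  | succ s IH =>
    intro V _ G R htr hirr hup hlo hfree
    classical
    set g : V → ℕ := fun u => (Finset.univ.filter (fun z => R z u)).card with hgdef
    have hg : ∀ {a b : V}, R a b → g a < g b := by
      intro a b h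
      apply Finset.card_lt_card
      constructor
      · intro z hz
        simp only [Finset.mem_filter, Finset.mem_univ, true_and] at hz ⊢
        exact htr hz h
      · intro hsub
        have ha : a ∈ Finset.univ.filter (fun z => R z b) := by simp [h]
        have := hsub ha
        simp only [Finset.mem_filter, Finset.mem_univ, true_and] at this
        exact hirr a this
    set NM : Set V := {u | ∃ z, R u z} with hNM
    set G' : SimpleGraph NM := G.comap Subtype.val with hG'
    have hfree' : G'.CliqueFree (s+1) := by
      intro tt htt
      set t' : Finset V := tt.map ⟨Subtype.val, Subtype.val_injective⟩ with ht'
      have ht'card : t'.card = s+1 := by rw [ht', Finset.card_map]; exact htt.2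
      have ht'cl : G.IsClique t' := by
        intro z hz z' hz' hne
        simp only [ht', Finset.coe_map, Set.mem_image, Finset.mem_coe,
          Function.Embedding.coeFn_mk] at hz hz'
        obtain ⟨a, ha, rfl⟩ := hz
        obtain ⟨a', ha', rfl⟩ := hz'
        exact htt.1 ha ha' (fun h => hne (congrArg Subtype.val h))
      have hne : t'.Nonempty := Finset.card_pos.1 (by omega)
      obtain ⟨c, hc, hcmax⟩ := Finset.exists_max_image t' g hne
      have hctop : ∀ a ∈ t', a ≠ c → R a c := by
        intro a ha hne'
        rcases hup a c (ht'cl ha hc hne') with h | h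
        · exact h
        · exact absurd (hcmax a ha) (not_le.2 (hg h))
      have hcnm : ∃ z, R c z := by
        have hcmem : c ∈ t' := hc
        simp only [ht', Finset.mem_map, Function.Embedding.coeFn_mk] at hcmem
        obtain ⟨⟨c0, hc0⟩, _, rfl⟩ := hcmem
        exact hc0
      obtain ⟨e, he⟩ := hcnm
      set U : Finset V := Finset.univ.filter (fun d => R c d) with hU
      have hUne : U.Nonempty := ⟨e, by simp [hU, he]⟩
      obtain ⟨d, hdU, hdmax⟩ := Finset.exists_max_image U g hUne
      have hRcd : R c d := by
        simp only [hU, Finset.mem_filter, Finset.mem_univ, true_and] at hdU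
        exact hdU
      have hdtop : ∀ z, ¬ R d z := by
        intro z hz
        have hzU : z ∈ U := by
          simp only [hU, Finset.mem_filter, Finset.mem_univ, true_and]
          exact htr hRcd hz
        exact absurd (hdmax z hzU) (not_le.2 (hg hz))
      have hdnot : d ∉ t' := by
        intro hd
        simp only [ht', Finset.mem_map, Function.Embedding.coeFn_mk] at hd
        obtain ⟨⟨d0, hd0⟩, _, rfl⟩ := hd
        obtain ⟨z, hz⟩ := hd0
        exact hdtop z hz
      apply hfree (insert d t')
      constructor
      · intro a ha b hb hab
        simp only [Finset.coe_insert, Set.mem_insert_iff, Finset.mem_coe] at ha hb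
        have key : ∀ a ∈ t', G.Adj a d := by
          intro a ha'
          by_cases hac : a = c
          · subst hac
            exact hlo a d (fun h => hirr d (h ▸ hRcd)) hRcd
          · have h1 : R a c := hctop a ha' hac
            have h2 : R a d := htr h1 hRcd
            exact hlo a d (fun h => hdtop a (h ▸ h2) ) h2
        rcases ha with rfl | ha <;> rcases hb with rfl | hb
        · exact absurd rfl hab
        · exact (key b hb).symm
        · exact key a ha
        · exact ht'cl ha hb hab
      · rw [Finset.card_insert_of_notMem hdnot, ht'card]
    have hcol' := IH NM G' (fun a b => R a.1 b.1)
      (fun a b c h1 h2 => htr h1 h2) (fun a h => hirr a.1 h)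
      (fun u v h => hup u.1 v.1 h)
      (fun u v hne h => hlo u.1 v.1 (fun hh => hne (Subtype.ext hh)) h)
      hfree'
    obtain ⟨C'⟩ := hcol'
    refine ⟨SimpleGraph.Coloring.mk
      (fun u => if h : u ∈ NM then (C' ⟨u, h⟩).castSucc else Fin.last s) ?_⟩
    intro u v huv heq
    by_cases hu : u ∈ NM <;> by_cases hv : v ∈ NM
    · rw [dif_pos hu, dif_pos hv] at heq
      exact C'.valid (show G'.Adj ⟨u, hu⟩ ⟨v, hv⟩ from huv) (Fin.castSucc_injective _ heq)
    · rw [dif_pos hu, dif_neg hv] at heq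
      exact absurd heq (Fin.ne_last_of_lt (Fin.castSucc_lt_last _))
    · rw [dif_neg hu, dif_pos hv] at heq
      exact absurd heq.symm (Fin.ne_last_of_lt (Fin.castSucc_lt_last _))
    · rcases hup u v huv with h | h
      · exact hu ⟨v, h⟩
      · exact hv ⟨u, h⟩
/-- The quantitative bound. -/
def fBound : ℕ → ℕ → ℕ → ℕ
  | 0, s, _ => s
  | (k+1), s, n => 2 * (Nat.size (2*n) + 1) * (fBound k s n * fBound k s n)

lemma fBound_pos (k s n : ℕ) (hs : 0 < s) : 0 < fBound k s n := by
  induction k with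
  | zero => exact hs
  | succ k ih =>
    show 0 < 2 * (Nat.size (2*n) + 1) * (fBound k s n * fBound k s n)
    have := Nat.mul_pos ih ih
    positivity

lemma main_col : ∀ (k : ℕ) (s n : ℕ) (W : Type) (σ : W → W → Prop),
    ((Transitive σ ∧ Irreflexive σ) ∨ (∀ a b, σ a b)) →
    ∀ (V : Type) [Fintype V] (G : SimpleGraph V) (x y : V → Fin k → ℝ) (w : V → W),
    Fintype.card V ≤ n →
    (∀ u v, G.Adj u v →
      (σ (w u) (w v) ∧ ∀ i, x u i < y v i) ∨ (σ (w v) (w u) ∧ ∀ i, x v i < y u i)) →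
    (∀ u v, u ≠ v → σ (w u) (w v) → (∀ i, x u i < y v i) → G.Adj u v) →
    G.CliqueFree s → G.Colorable (fBound k s n) := by
  intro k
  induction k with
  | zero =>
    intro s n W σ Hσ V _ G x y w hcard hup hlo hfree
    rcases s with _ | s
    · exact absurd hfree (fun h => h ∅ ⟨by simp, by simp⟩)
    show G.Colorable (s+1)
    rcases Hσ with ⟨htr, hirr⟩ | huniv
    · refine (base_colorable s V G (fun a b => σ (w a) (w b))
        (fun a b c h1 h2 => htr h1 h2) (fun a h => hirr (w a) h)
        (fun u v h => ?_) (fun u v hne h => hlo u v hne h (fun i => i.elim0)) hfree).mono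
        (Nat.le_succ s)
      rcases hup u v h with ⟨h1, _⟩ | ⟨h1, _⟩
      · exact Or.inl h1
      · exact Or.inr h1
    · have hcomp : ∀ u v : V, u ≠ v → G.Adj u v :=
        fun u v hne => hlo u v hne (huniv _ _) (fun i => i.elim0)
      have hcards : Fintype.card V ≤ s := by
        by_contra hc
        push_neg at hc
        obtain ⟨tt, -, htt⟩ := Finset.exists_subset_card_eq
          (show s + 1 ≤ Finset.univ.card by simpa using hc)
        exact hfree tt ⟨fun a _ b _ hne => hcomp a b hne, htt⟩
      exact (SimpleGraph.colorable_of_fintype G).mono (le_trans hcards (Nat.le_succ s))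
  | succ k IH =>
    intro s n W σ Hσ V _ G x y w hcard hup hlo hfree
    classical
    have hs : 0 < s := by
      rcases Nat.eq_zero_or_pos s with rfl | h
      · exact absurd hfree (fun h => h ∅ ⟨by simp, by simp⟩)
      · exact h
    have hfkpos : 0 < fBound k s n := fBound_pos k s n hs
    -- the rank function on first coordinates
    set S : Finset ℝ :=
      (Finset.univ.image (fun u : V => x u 0)) ∪ (Finset.univ.image (fun u : V => y u 0)) with hS
    set r : ℝ → ℕ := fun a => (S.filter (fun b => b < a)).card with hr
    have hrank : ∀ (a b : ℝ), a ∈ S → (a < b ↔ r a < r b) := by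
      intro a b haS
      constructor
      · intro hab
        apply Finset.card_lt_card
        constructor
        · intro z hz
          simp only [hr, Finset.mem_filter] at hz ⊢
          exact ⟨hz.1, hz.2.trans hab⟩
        · intro hsub
          have h1 : a ∈ S.filter (fun c => c < b) := by
            simp only [Finset.mem_filter]; exact ⟨haS, hab⟩
          have h2 := hsub h1
          simp only [Finset.mem_filter] at h2
          exact lt_irrefl a h2.2
      · intro hrr
        by_contra hab
        push_neg at hab
        have hsub : S.filter (fun c => c < b) ⊆ S.filter (fun c => c < a) := by
          intro z hz
          simp only [Finset.mem_filter] at hz ⊢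
          exact ⟨hz.1, lt_of_lt_of_le hz.2 hab⟩
        exact absurd (Finset.card_le_card hsub) (not_le.2 hrr)
    set rx : V → ℕ := fun u => r (x u 0) with hrx
    set ry : V → ℕ := fun u => r (y u 0) with hry
    have hxS : ∀ u : V, x u 0 ∈ S := fun u =>
      Finset.mem_union_left _ (Finset.mem_image_of_mem _ (Finset.mem_univ u))
    have hiffxy : ∀ u v : V, (x u 0 < y v 0 ↔ rx u < ry v) := fun u v =>
      hrank _ _ (hxS u)
    have hbnd : ∀ a : ℝ, r a < 2 ^ Nat.size (2*n) := by
      intro a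
      have h1 : r a ≤ S.card := Finset.card_filter_le _ _
      have h2 : S.card ≤ 2 * n := by
        calc S.card ≤ (Finset.univ.image (fun u : V => x u 0)).card
            + (Finset.univ.image (fun u : V => y u 0)).card := Finset.card_union_le _ _
          _ ≤ Fintype.card V + Fintype.card V := by
              have e1 := Finset.card_image_le (s := (Finset.univ : Finset V))
                (f := fun u : V => x u 0)
              have e2 := Finset.card_image_le (s := (Finset.univ : Finset V))
                (f := fun u : V => y u 0)
              simp only [Finset.card_univ] at e1 e2
              omega
          _ ≤ 2 * n := by omega
      have h3 : 2*n < 2 ^ Nat.size (2*n) := Nat.lt_size_self (2*n)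
      omega
    -- dyadic levels and prefixes
    have hex : ∀ u : V, ∃ l, rx u / 2^l = ry u / 2^l := fun u =>
      ⟨Nat.size (2*n), by rw [Nat.div_eq_of_lt (hbnd _), Nat.div_eq_of_lt (hbnd _)]⟩
    set lev : V → ℕ := fun u => Nat.find (hex u) with hlevdef
    have hlevle : ∀ u, lev u ≤ Nat.size (2*n) := fun u =>
      Nat.find_le (by rw [Nat.div_eq_of_lt (hbnd _), Nat.div_eq_of_lt (hbnd _)])
    set P : V → ℕ := fun u => rx u / 2^(lev u) with hPdef
    have hPy : ∀ u, P u = ry u / 2^(lev u) := fun u => Nat.find_spec (hex u)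
    have hPx : ∀ u, P u = rx u / 2^(lev u) := fun u => rfl
    have hmin : ∀ u, ∀ j, j < lev u → rx u / 2^j ≠ ry u / 2^j := fun u j hj =>
      Nat.find_min (hex u) hj
    set fwd : V → Prop := fun u => rx u < ry u with hfwddef
    set fwdB : V → Bool := fun u => decide (rx u < ry u) with hfwdBdef
    have hfwdB_iff : ∀ u, fwdB u = true ↔ fwd u := fun u => by
      simp [hfwdBdef, hfwddef]
    have hfwdlev : ∀ u, fwd u → ∃ l', lev u = l' + 1 := by
      intro u hu
      rcases Nat.eq_zero_or_pos (lev u) with h0 | hpos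
      · exfalso
        have hspec := hPy u
        rw [hPx u, h0] at hspec
        simp only [pow_zero, Nat.div_one] at hspec
        exact absurd hspec (Nat.ne_of_lt hu)
      · exact ⟨lev u - 1, by omega⟩
    -- same-cell comparisons
    have cellF : ∀ u v : V, fwd u → fwd v → lev u = lev v → P u = P v → rx u < ry v := by
      intro u v hu hv hl hp
      obtain ⟨l', hl'⟩ := hfwdlev u hu
      refine key_fwd (rx u) (ry u) (rx v) (ry v) l' (P u) ?_ ?_ ?_ hu ?_ ?_ ?_ hv
      · rw [← hl']
      · rw [← hl']; exact (hPy u).symm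
      · exact hmin u l' (by omega)
      · rw [← hl', hl, hp]
      · rw [← hl', hl, hp]; exact (hPy v).symm
      · exact hmin v l' (by rw [← hl, hl']; omega)
    have cellB : ∀ u v : V, ¬ fwd u → ¬ fwd v → lev u = lev v → P u = P v →
        ¬ rx u < ry v := by
      intro u v hu hv hl hp
      refine key_bwd (rx u) (ry u) (rx v) (ry v) (lev u) (P u) ?_ ?_ ?_ ?_ ?_ ?_ ?_ ?_
      · exact (hPx u).symm
      · exact (hPy u).symm
      · rw [hl, hp]
      · rw [hl, hp]; exact (hPy v).symm
      · exact not_lt.1 hu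
      · exact not_lt.1 hv
      · exact hmin u
      · intro j hj; exact hmin v j (hl ▸ hj)
    have crossLe : ∀ u v : V, lev u = lev v → rx u < ry v → P u ≤ P v := by
      intro u v hl h
      exact key_cross_le (rx u) (ry v) (lev u) (P u) (P v) (hPx u).symm
        (by rw [hl]; exact (hPy v).symm) h.le
    have crossLt : ∀ u v : V, lev u = lev v → P u < P v → rx u < ry v := by
      intro u v hl h
      exact key_cross_lt (rx u) (ry v) (lev u) (P u) (P v) (hPx u).symm
        (by rw [hl]; exact (hPy v).symm) h
    -- within-cell graphs (forward cells), as comap graphs on subtypes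
    have hcol1 : ∀ l p : ℕ,
        (SimpleGraph.comap (Subtype.val : {v : V // fwd v ∧ lev v = l ∧ P v = p} → V) G).Colorable
          (fBound k s n) := by
      intro l p
      refine IH s n W σ Hσ _ _ (fun v i => x v.1 i.succ) (fun v i => y v.1 i.succ)
        (fun v => w v.1) (le_trans (Fintype.card_subtype_le _) hcard) ?_ ?_ ?_
      · intro a b hab
        rcases hup a.1 b.1 hab with ⟨h1, h2⟩ | ⟨h1, h2⟩
        · exact Or.inl ⟨h1, fun i => h2 i.succ⟩
        · exact Or.inr ⟨h1, fun i => h2 i.succ⟩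
      · intro a b hne h1 h2
        have h0 : x a.1 0 < y b.1 0 := by
          rw [hiffxy]
          exact cellF a.1 b.1 a.2.1 b.2.1 (by rw [a.2.2.1, b.2.2.1]) (by rw [a.2.2.2, b.2.2.2])
        have hfull : ∀ i, x a.1 i < y b.1 i := by
          intro i
          refine Fin.cases h0 (fun j => h2 j) i
        exact hlo a.1 b.1 (fun hh => hne (Subtype.ext hh)) h1 hfull
      · exact cliqueFree_of_map G _ Subtype.val Subtype.val_injective (fun a b h => h) hfree
    have col1 : ∀ l p : ℕ,
        (SimpleGraph.comap (Subtype.val : {v : V // fwd v ∧ lev v = l ∧ P v = p} → V) G).Coloring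
          (Fin (fBound k s n)) := fun l p => (hcol1 l p).some
    set Col1 : ℕ → ℕ → V → Fin (fBound k s n) := fun l p v =>
      if h : fwd v ∧ lev v = l ∧ P v = p then col1 l p ⟨v, h⟩ else ⟨0, hfkpos⟩ with hCol1
    -- cross-cell graphs per (flag, level)
    set cg : ∀ (bb : Bool) (l : ℕ), SimpleGraph {v : V // fwdB v = bb ∧ lev v = l} := fun bb l =>
      { Adj := fun a c => G.Adj a.1 c.1 ∧ P a.1 ≠ P c.1
        symm := ⟨by intro a c h; exact ⟨h.1.symm, Ne.symm h.2⟩⟩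
        loopless := ⟨by intro a h; exact G.irrefl h.1⟩ } with hcgdef
    have cgAdj : ∀ (bb : Bool) (l : ℕ) (a c : {v : V // fwdB v = bb ∧ lev v = l}),
        (cg bb l).Adj a c ↔ (G.Adj a.1 c.1 ∧ P a.1 ≠ P c.1) := fun _ _ _ _ => Iff.rfl
    have hcol2 : ∀ (bb : Bool) (l : ℕ), (cg bb l).Colorable (fBound k s n) := by
      intro bb l
      refine IH s n (ℕ × W) (fun pq rs => pq.1 < rs.1 ∧ σ pq.2 rs.2) ?_ _ _
        (fun v i => x v.1 i.succ) (fun v i => y v.1 i.succ)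
        (fun v => (P v.1, w v.1)) (le_trans (Fintype.card_subtype_le _) hcard) ?_ ?_ ?_
      · left
        constructor
        · intro a b c h1 h2
          refine ⟨h1.1.trans h2.1, ?_⟩
          rcases Hσ with ⟨htr, _⟩ | huniv
          · exact htr h1.2 h2.2
          · exact huniv _ _
        · intro a h
          exact lt_irrefl a.1 h.1
      · intro a b hab
        rw [cgAdj] at hab
        obtain ⟨hadj, hPne⟩ := hab
        rcases hup a.1 b.1 hadj with ⟨h1, h2⟩ | ⟨h1, h2⟩
        · refine Or.inl ⟨⟨?_, h1⟩, fun i => h2 i.succ⟩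
          have h0 : rx a.1 < ry b.1 := (hiffxy _ _).1 (h2 0)
          exact lt_of_le_of_ne (crossLe _ _ (by rw [a.2.2, b.2.2]) h0) hPne
        · refine Or.inr ⟨⟨?_, h1⟩, fun i => h2 i.succ⟩
          have h0 : rx b.1 < ry a.1 := (hiffxy _ _).1 (h2 0)
          exact lt_of_le_of_ne (crossLe _ _ (by rw [a.2.2, b.2.2]) h0) (Ne.symm hPne)
      · intro a b hne h1 h2
        have h0 : x a.1 0 < y b.1 0 :=
          (hiffxy _ _).2 (crossLt _ _ (by rw [a.2.2, b.2.2]) h1.1)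
        have hfull : ∀ i, x a.1 i < y b.1 i := fun i => Fin.cases h0 (fun j => h2 j) i
        rw [cgAdj]
        exact ⟨hlo a.1 b.1 (fun hh => hne (Subtype.ext hh)) h1.2 hfull, Nat.ne_of_lt h1.1⟩
      · exact cliqueFree_of_map G (cg bb l) Subtype.val Subtype.val_injective (fun a b h => h.1) hfree
    have col2 : ∀ (bb : Bool) (l : ℕ), (cg bb l).Coloring (Fin (fBound k s n)) :=
      fun bb l => (hcol2 bb l).some
    set Col2 : Bool → ℕ → V → Fin (fBound k s n) := fun bb l v =>
      if h : fwdB v = bb ∧ lev v = l then col2 bb l ⟨v, h⟩ else ⟨0, hfkpos⟩ with hCol2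
    -- the final coloring
    set C : V → Bool × Fin (Nat.size (2*n) + 1) × Fin (fBound k s n) × Fin (fBound k s n) :=
      fun v => (fwdB v, ⟨lev v, Nat.lt_succ_of_le (hlevle v)⟩,
        Col1 (lev v) (P v) v, Col2 (fwdB v) (lev v) v) with hC
    have hvalid : ∀ {u v : V}, G.Adj u v → C u ≠ C v := by
      intro u v hadj heq
      simp only [hC, Prod.mk.injEq, Fin.mk.injEq] at heq
      obtain ⟨e1, e2, e3, e4⟩ := heq
      by_cases hPuv : P u = P v
      · by_cases hfu : fwd u
        · have hfv : fwd v := by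
            rw [← hfwdB_iff, ← e1, hfwdB_iff]; exact hfu
          have hu' : fwd u ∧ lev u = lev u ∧ P u = P u := ⟨hfu, rfl, rfl⟩
          have hv' : fwd v ∧ lev v = lev u ∧ P v = P u := ⟨hfv, e2.symm, hPuv.symm⟩
          rw [← e2, ← hPuv] at e3
          rw [show Col1 (lev u) (P u) u = col1 (lev u) (P u) ⟨u, hu'⟩ from dif_pos hu',
            show Col1 (lev u) (P u) v = col1 (lev u) (P u) ⟨v, hv'⟩ from dif_pos hv'] at e3
          exact (col1 (lev u) (P u)).valid
            (show (SimpleGraph.comap Subtype.val G).Adj ⟨u, hu'⟩ ⟨v, hv'⟩ from hadj) e3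
        · have hfv : ¬ fwd v := by
            rw [← hfwdB_iff, ← e1, hfwdB_iff]; exact hfu
          rcases hup u v hadj with ⟨_, h2⟩ | ⟨_, h2⟩
          · exact cellB u v hfu hfv e2 hPuv ((hiffxy _ _).1 (h2 0))
          · exact cellB v u hfv hfu e2.symm hPuv.symm ((hiffxy _ _).1 (h2 0))
      · have hu' : fwdB u = fwdB u ∧ lev u = lev u := ⟨rfl, rfl⟩
        have hv' : fwdB v = fwdB u ∧ lev v = lev u := ⟨e1.symm, e2.symm⟩
        rw [← e1, ← e2] at e4
        rw [show Col2 (fwdB u) (lev u) u = col2 (fwdB u) (lev u) ⟨u, hu'⟩ from dif_pos hu',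
          show Col2 (fwdB u) (lev u) v = col2 (fwdB u) (lev u) ⟨v, hv'⟩ from dif_pos hv'] at e4
        exact (col2 (fwdB u) (lev u)).valid ((cgAdj _ _ _ _).2 ⟨hadj, hPuv⟩) e4
    have hcol : G.Colorable (Fintype.card
        (Bool × Fin (Nat.size (2*n) + 1) × Fin (fBound k s n) × Fin (fBound k s n))) :=
      (SimpleGraph.Coloring.mk C hvalid).colorable
    refine hcol.mono (le_of_eq ?_)
    show _ = fBound (k+1) s n
    simp only [Fintype.card_prod, Fintype.card_bool, Fintype.card_fin]
    show 2 * ((Nat.size (2*n) + 1) * (fBound k s n * fBound k s n))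
      = 2 * (Nat.size (2*n) + 1) * (fBound k s n * fBound k s n)
    ring
lemma fBound_le (k s n : ℕ) :
    fBound k s n ≤ (2*(Nat.size (2*n)+1))^(2^k - 1) * s^(2^k) := by
  induction k with
  | zero => simp [fBound]
  | succ k ih =>
    have h2k : 1 ≤ 2^k := Nat.one_le_two_pow
    have h2k1 : 2^(k+1) = 2*2^k := by rw [pow_succ]; ring
    calc fBound (k+1) s n = 2*(Nat.size (2*n)+1) * (fBound k s n * fBound k s n) := rfl
      _ ≤ 2*(Nat.size (2*n)+1) * (((2*(Nat.size (2*n)+1))^(2^k-1) * s^(2^k))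
          * ((2*(Nat.size (2*n)+1))^(2^k-1) * s^(2^k))) :=
        Nat.mul_le_mul_left _ (Nat.mul_le_mul ih ih)
      _ = (2*(Nat.size (2*n)+1))^((2^k-1)+(2^k-1)+1) * (s^(2^k) * s^(2^k)) := by
        rw [pow_add, pow_add, pow_one]; ring
      _ = (2*(Nat.size (2*n)+1))^(2^(k+1)-1) * s^(2^(k+1)) := by
        have e1 : (2^k-1)+(2^k-1)+1 = 2^(k+1)-1 := by omega
        have e2 : 2^(k+1) = 2^k + 2^k := by omega
        rw [e1, e2, pow_add]
/-- For every positive integer `t` there are constants `α, β, γ > 0` such that every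
quasi-comparability graph of complexity `t` on `n ≥ 2` vertices with no clique of size `s` has
chromatic number at most `α·s^β·(log₂ n)^γ`. -/
theorem stmt5 (t : ℕ) (ht : 0 < t) :
    ∃ α β γ : ℝ, 0 < α ∧ 0 < β ∧ 0 < γ ∧
      ∀ (s n : ℕ), 0 < s → 2 ≤ n →
        ∀ (V : Type) [Fintype V] (G : SimpleGraph V),
          Fintype.card V = n → IsQuasiComp G t → G.CliqueFree s →
          ∃ m : ℕ, G.chromaticNumber ≤ (m : ℕ∞) ∧
            (m : ℝ) ≤ α * (s : ℝ) ^ β * (Real.logb 2 n) ^ γ := by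
  refine ⟨(8:ℝ)^(2^t : ℕ), ((2^t : ℕ) : ℝ), ((2^t : ℕ) : ℝ), by positivity,
    by positivity, by positivity, ?_⟩
  intro s n hs hn V _ G hcard hqc hfree
  obtain ⟨vm, hinj, hiff⟩ := hqc
  have hcol : G.Colorable (fBound t s n) := by
    refine main_col t s n Unit (fun _ _ => True) (Or.inr fun _ _ => trivial) V G
      (fun u => (vm u).1) (fun u => (vm u).2) (fun _ => ()) (le_of_eq hcard) ?_ ?_ hfree
    · intro u v hadj
      rcases (hiff u v hadj.ne).1 hadj with h | h
      · exact Or.inl ⟨trivial, h⟩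
      · exact Or.inr ⟨trivial, h⟩
    · intro u v hne _ h
      exact (hiff u v hne).2 (Or.inl h)
  refine ⟨fBound t s n, hcol.chromaticNumber_le, ?_⟩
  set L : ℝ := Real.logb 2 n with hLdef
  have hn0 : (0:ℝ) < n := by positivity
  have hL1 : 1 ≤ L := by
    rw [hLdef, Real.le_logb_iff_rpow_le (by norm_num) hn0]
    rw [Real.rpow_one]
    exact_mod_cast hn
  have hlogle : (Nat.log 2 n : ℝ) ≤ L := by
    rw [hLdef, Real.le_logb_iff_rpow_le (by norm_num) hn0]
    rw [Real.rpow_natCast]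
    exact_mod_cast Nat.pow_log_le_self 2 (by omega)
  have hsize : Nat.size (2*n) ≤ Nat.log 2 n + 2 := by
    rw [Nat.size_le]
    have h1 : n < 2^(Nat.log 2 n + 1) := Nat.lt_pow_succ_log_self (by norm_num) n
    have h2 : (2:ℕ)^(Nat.log 2 n + 2) = 2 * 2^(Nat.log 2 n + 1) := by rw [pow_succ]; ring
    omega
  have hc8L : ((2*(Nat.size (2*n)+1) : ℕ) : ℝ) ≤ 8 * L := by
    have h1 : ((2*(Nat.size (2*n)+1) : ℕ) : ℝ) ≤ 2 * ((Nat.log 2 n : ℝ) + 3) := by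
      push_cast
      have : (Nat.size (2*n) : ℝ) ≤ (Nat.log 2 n : ℝ) + 2 := by exact_mod_cast hsize
      linarith
    have h2 : 2 * ((Nat.log 2 n : ℝ) + 3) ≤ 2 * (L + 3) := by linarith
    linarith
  have hfb : (fBound t s n : ℝ) ≤
      ((2*(Nat.size (2*n)+1) : ℕ) : ℝ)^(2^t - 1) * (s : ℝ)^(2^t) := by
    have := fBound_le t s n
    exact_mod_cast this
  have hs1 : (1:ℝ) ≤ (s:ℝ) := by exact_mod_cast hs
  have h8L1 : (1:ℝ) ≤ 8 * L := by linarith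
  have hstep1 : ((2*(Nat.size (2*n)+1) : ℕ) : ℝ)^(2^t - 1) ≤ (8*L)^(2^t - 1) :=
    pow_le_pow_left₀ (by positivity) hc8L _
  have hstep2 : (8*L)^(2^t - 1) ≤ (8*L)^(2^t) :=
    pow_le_pow_right₀ h8L1 (Nat.sub_le _ _)
  have hfinal : (fBound t s n : ℝ) ≤ (8:ℝ)^(2^t) * (s:ℝ)^(2^t) * L^(2^t) := by
    calc (fBound t s n : ℝ)
        ≤ ((2*(Nat.size (2*n)+1) : ℕ) : ℝ)^(2^t - 1) * (s : ℝ)^(2^t) := hfb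
      _ ≤ (8*L)^(2^t) * (s : ℝ)^(2^t) := by
          refine mul_le_mul_of_nonneg_right (le_trans hstep1 hstep2) (by positivity)
      _ = (8:ℝ)^(2^t) * (s:ℝ)^(2^t) * L^(2^t) := by rw [mul_pow]; ring
  rw [Real.rpow_natCast, Real.rpow_natCast]
  exact hfinal
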